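/- There is no time t at which the complete graph K_n (n ≥ 5) has uniform mixing; concretely, for n ≥ 5 there is no real t such that every entry of exp(-i·A(K_n)·t) has modulus 1/√n. -/

import Mathlib

open Matrix

open NormedSpace in
lemma tsum_exp_shift (x : ℂ) :
    ∑' k : ℕ, (((k + 1).factorial⁻¹ : ℂ) * x ^ (k + 1)) = Complex.exp x - 1 := by
  have hsum : Summable fun k : ℕ => ((k.factorial⁻¹ : ℂ) • x ^ k) :=
    NormedSpace.expSeries_summable' (𝕂 := ℂ) x
  have h := Summable.tsum_eq_zero_add hsum
  have hexp : Complex.exp x = ∑' k : ℕ, ((k.factorial⁻¹ : ℂ) • x ^ k) := by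
    rw [Complex.exp_eq_exp_ℂ, NormedSpace.exp_eq_tsum ℂ]
  rw [hexp, h]
  simp [smul_eq_mul]

set_option maxHeartbeats 1000000 in
open NormedSpace in
lemma exp_smul_idem {𝔸 : Type*} [NormedRing 𝔸] [NormedAlgebra ℂ 𝔸] [CompleteSpace 𝔸]
    (x : ℂ) (P : 𝔸) (hP : P * P = P) :
    exp (x • P) = 1 + (Complex.exp x - 1) • P := by
  have hpow : ∀ k : ℕ, P ^ (k + 1) = P := by
    intro k
    induction k with
    | zero => simp
    | succ k ih => rw [pow_succ, ih, hP]
  have hsum : Summable fun k : ℕ => ((k.factorial⁻¹ : ℂ) • (x • P) ^ k) :=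
    NormedSpace.expSeries_summable' (𝕂 := ℂ) (x • P)
  rw [NormedSpace.exp_eq_tsum ℂ]
  dsimp only
  rw [Summable.tsum_eq_zero_add hsum]
  have h1 : ∀ k : ℕ, (((k + 1).factorial⁻¹ : ℂ) • (x • P) ^ (k + 1))
      = (((k + 1).factorial⁻¹ : ℂ) * x ^ (k + 1)) • P := by
    intro k
    rw [smul_pow, hpow, smul_smul]
  have hc0 : Summable fun k : ℕ => ((k.factorial⁻¹ : ℂ) * x ^ k) := by
    simpa [smul_eq_mul] using NormedSpace.expSeries_summable' (𝕂 := ℂ) x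
  have hc : Summable fun k : ℕ => (((k + 1).factorial⁻¹ : ℂ) * x ^ (k + 1)) :=
    (summable_nat_add_iff (f := fun k : ℕ => ((k.factorial⁻¹ : ℂ) * x ^ k)) 1).2 hc0
  simp only [h1]
  rw [Summable.tsum_smul_const hc, tsum_exp_shift]
  simp

set_option maxHeartbeats 1000000 in
/-- for `n ≥ 5`, the complete graph `K_n` (adjacency matrix `J - I`) has no
uniform mixing: there is no real time `t` at which every entry of `exp(-iA t)` has
modulus `1/√n`. -/
theorem stmt11 (n : ℕ) (hn : 5 ≤ n) :
    ¬ ∃ t : ℝ, ∀ a b : Fin n,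
      ‖(NormedSpace.exp ((-(Complex.I * (t : ℂ))) •
        (Matrix.of fun i j : Fin n => if i = j then (0 : ℂ) else 1))) a b‖ =
      1 / Real.sqrt n := by
  rintro ⟨t, ht⟩
  letI : SeminormedRing (Matrix (Fin n) (Fin n) ℂ) := Matrix.linftyOpSemiNormedRing
  letI : NormedRing (Matrix (Fin n) (Fin n) ℂ) := Matrix.linftyOpNormedRing
  letI : NormedAlgebra ℂ (Matrix (Fin n) (Fin n) ℂ) := Matrix.linftyOpNormedAlgebra
  set x : ℂ := -(Complex.I * (t : ℂ)) with hx
  have hn0 : (n : ℂ) ≠ 0 := by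
    exact_mod_cast Nat.cast_ne_zero.mpr (by omega)
  set J : Matrix (Fin n) (Fin n) ℂ := Matrix.of (fun _ _ => (1 : ℂ)) with hJ
  set P : Matrix (Fin n) (Fin n) ℂ := ((n : ℂ)⁻¹) • J with hPdef
  have hJJ : J * J = (n : ℂ) • J := by
    ext i j
    simp [hJ, Matrix.mul_apply, Matrix.smul_apply]
  have hP : P * P = P := by
    rw [hPdef, smul_mul_smul_comm, hJJ, smul_smul]
    congr 1
    field_simp
  have hsplit : x • (Matrix.of fun i j : Fin n => if i = j then (0 : ℂ) else 1)
      = ((n : ℂ) * x) • P + (-x) • (1 : Matrix (Fin n) (Fin n) ℂ) := by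
    ext i j
    by_cases h : i = j
    · simp [hPdef, hJ, Matrix.one_apply, h, smul_eq_mul]
      field_simp
      ring
    · simp [hPdef, hJ, Matrix.one_apply, h, smul_eq_mul]
      field_simp
  have hcomm : Commute (((n : ℂ) * x) • P) ((-x) • (1 : Matrix (Fin n) (Fin n) ℂ)) :=
    ((Commute.one_right P).smul_left _).smul_right _
  have hexp : NormedSpace.exp (x • (Matrix.of fun i j : Fin n => if i = j then (0 : ℂ) else 1))
      = (1 + (Complex.exp ((n : ℂ) * x) - 1) • P) *
        (1 + (Complex.exp (-x) - 1) • (1 : Matrix (Fin n) (Fin n) ℂ)) := by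
    rw [hsplit, Matrix.exp_add_of_commute _ _ hcomm]
    exact congrArg₂ (· * ·) (exp_smul_idem _ _ hP)
      (exp_smul_idem _ _ (by simp : (1 : Matrix (Fin n) (Fin n) ℂ) * 1 = 1))
  set a : Fin n := ⟨0, by omega⟩ with ha
  set b : Fin n := ⟨1, by omega⟩ with hb
  have hab : a ≠ b := by
    simp [ha, hb, Fin.ext_iff]
  have hentry : (NormedSpace.exp (x • (Matrix.of fun i j : Fin n =>
      if i = j then (0 : ℂ) else 1))) a b
      = Complex.exp (-x) * (Complex.exp ((n : ℂ) * x) - 1) / n := by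
    rw [hexp]
    have h1 : (1 : Matrix (Fin n) (Fin n) ℂ) + (Complex.exp (-x) - 1) • 1
        = Complex.exp (-x) • (1 : Matrix (Fin n) (Fin n) ℂ) := by
      module
    rw [h1, Matrix.mul_smul, Matrix.smul_apply, Matrix.mul_one, Matrix.add_apply,
      Matrix.one_apply_ne hab, Matrix.smul_apply, hPdef, Matrix.smul_apply]
    simp only [hJ, Matrix.of_apply, smul_eq_mul, mul_one, zero_add]
    try field_simp
    try ring
  have ht01 := ht a b
  rw [hentry] at ht01
  have habs1 : ‖Complex.exp (-x)‖ = 1 := by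
    rw [Complex.norm_exp]
    simp [hx]
  rw [norm_div, norm_mul, habs1, one_mul, Complex.norm_natCast] at ht01
  have habs2 : ‖Complex.exp ((n : ℂ) * x) - 1‖ ≤ 2 := by
    calc ‖Complex.exp ((n : ℂ) * x) - 1‖
        ≤ ‖Complex.exp ((n : ℂ) * x)‖ + ‖(-1 : ℂ)‖ := by
          rw [sub_eq_add_neg]
          exact norm_add_le _ (-1)
      _ ≤ 2 := by
          rw [Complex.norm_exp]
          simp [hx, mul_comm]
          norm_num
  set s : ℝ := Real.sqrt n with hs
  have hss : s * s = n := Real.mul_self_sqrt (by positivity)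
  have hs2 : 2 < s := by
    have h5 : (5 : ℝ) ≤ n := by exact_mod_cast hn
    have : (2 : ℝ) ^ 2 < (n : ℝ) := by nlinarith
    exact (Real.lt_sqrt (by norm_num)).2 this
  have hnpos : (0 : ℝ) < n := by positivity
  have hspos : (0 : ℝ) < s := by linarith
  have key : ‖Complex.exp ((n : ℂ) * x) - 1‖ = s := by
    have h' : ‖Complex.exp ((n : ℂ) * x) - 1‖ * s = n := by
      field_simp at ht01
      linarith [ht01]
    nlinarith
  rw [key] at habs2
  linarith
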